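/- arXiv:2104.02254 — 5 statements merged into one kernel-verified Lean document; each statement's English description precedes it below -/
import Mathlib

section
/- For a Gabidulin code G_{n,k}(a) with k + s ≤ n ≤ m generated by a vector a of rank weight n, and a positive integer s, the sum G_{n,k}(a) + G_{n,k}(a)^{[1]} + ... + G_{n,k}(a)^{[s]} equals the Gabidulin code G_{n,k+s}(a). -/
open Pointwise

/-- The Gabidulin code `G_{n,k}(a)`: the `K`-span of `a, a^{[1]}, …, a^{[k-1]}`. -/
def gab (K : Type*) [Field K] (q k : ℕ) {n : ℕ} (a : Fin n → K) :
    Submodule K (Fin n → K) :=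
  Submodule.span K (Set.range fun s : Fin k => fun j => a j ^ q ^ (s : ℕ))

/-- Sum of spans is the span of the union of generating sets. -/
lemma sum_span_eq {K M : Type*} [Field K] [AddCommGroup M] [Module K M]
    (t : Finset ℕ) (S : ℕ → Set M) :
    ∑ i ∈ t, Submodule.span K (S i) = Submodule.span K (⋃ i ∈ t, S i) := by
  classical
  induction t using Finset.induction with
  | empty => simp
  | insert _ _ h ih =>
    rw [Finset.sum_insert h, ih, Submodule.add_eq_sup, ← Submodule.span_union]
    congr 1
    simp [Set.iUnion_iUnion_eq_or_left]

lemma coe_sum_submodule {K M : Type*} [Field K] [AddCommGroup M] [Module K M]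
    (t : Finset ℕ) (f : ℕ → Submodule K M) :
    (∑ i ∈ t, (↑(f i) : Set M)) = ↑(∑ i ∈ t, f i) := by
  classical
  induction t using Finset.induction with
  | empty => simp; rfl
  | insert _ _ h ih =>
    rw [Finset.sum_insert h, Finset.sum_insert h, ih, Submodule.add_eq_sup,
      Submodule.coe_sup]

/-- for a Gabidulin code `G_{n,k}(a)` with `k + s ≤ n ≤ m`
generated by `a` of rank weight `n`, and `s ≥ 1`, the pointwise sum
`G_{n,k}(a) + G_{n,k}(a)^{[1]} + ⋯ + G_{n,k}(a)^{[s]}` equals `G_{n,k+s}(a)`. -/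
theorem gab_sum_frob_powers {Fq K : Type*} [Field Fq] [Fintype Fq] [Field K]
    [Algebra Fq K] {n k s : ℕ} (hk : 1 ≤ k) (hs : 1 ≤ s) (hkn : k + s ≤ n)
    (hnm : n ≤ Module.finrank Fq K)
    (a : Fin n → K) (ha : LinearIndependent Fq a) :
    (∑ i ∈ Finset.range (s + 1),
        (fun x : Fin n → K => fun j => x j ^ Fintype.card Fq ^ i) ''
          ↑(gab K (Fintype.card Fq) k a) : Set (Fin n → K))
      = ↑(gab K (Fintype.card Fq) (k + s) a) := by
  classical
  set q := Fintype.card Fq with hq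
  -- `K` is finite
  haveI : Module.Finite Fq K := Module.finite_of_finrank_pos (by omega)
  haveI : Finite K := Module.finite_of_finite Fq
  -- characteristic data
  obtain ⟨p, hpc⟩ := CharP.exists Fq
  haveI : CharP Fq p := hpc
  haveI : Fintype K := Fintype.ofFinite K
  obtain ⟨e, hp, hcard⟩ := FiniteField.card Fq p
  haveI : Fact p.Prime := ⟨hp⟩
  haveI : CharP K p := charP_of_injective_algebraMap (algebraMap Fq K).injective p
  have hqpe : q = p ^ (e : ℕ) := hcard
  -- the semilinear Frobenius-power maps
  let σ : ℕ → K →+* K := fun i => iterateFrobenius K p ((e : ℕ) * i)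
  have hσ : ∀ i (x : K), σ i x = x ^ q ^ i := by
    intro i x
    rw [iterateFrobenius_def, hqpe, ← pow_mul]
  haveI hsurj : ∀ i, RingHomSurjective (σ i) := by
    intro i
    exact ⟨Finite.injective_iff_surjective.mp (σ i).injective⟩
  let f : ∀ i : ℕ, (Fin n → K) →ₛₗ[σ i] (Fin n → K) := fun i =>
    { toFun := fun x j => σ i (x j)
      map_add' := fun x y => by funext j; simp
      map_smul' := fun c x => by funext j; simp [Pi.smul_apply, smul_eq_mul] }
  -- each image is a span
  have key : ∀ i, (fun x : Fin n → K => fun j => x j ^ q ^ i) ''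
      ↑(gab K q k a)
      = ↑(Submodule.span K (Set.range fun t : Fin k => fun j => a j ^ q ^ ((t : ℕ) + i))) := by
    intro i
    have h1 : (fun x : Fin n → K => fun j => x j ^ q ^ i) = ⇑(f i) := by
      funext x j
      simp [f, hσ]
    have h2 : (⇑(f i) ∘ fun t : Fin k => fun j => a j ^ q ^ (t : ℕ))
        = fun t : Fin k => fun j => a j ^ q ^ ((t : ℕ) + i) := by
      funext t j
      simp only [Function.comp_apply, f, LinearMap.coe_mk, AddHom.coe_mk, hσ,
        ← pow_mul, ← pow_add]
    rw [h1, ← Submodule.map_coe, gab, Submodule.map_span, ← Set.range_comp, h2]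
  calc (∑ i ∈ Finset.range (s + 1),
        (fun x : Fin n → K => fun j => x j ^ q ^ i) '' ↑(gab K q k a) : Set (Fin n → K))
      = ∑ i ∈ Finset.range (s + 1),
          (↑(Submodule.span K (Set.range fun t : Fin k => fun j => a j ^ q ^ ((t : ℕ) + i)))
            : Set (Fin n → K)) := by
        exact Finset.sum_congr rfl fun i _ => key i
    _ = ↑(∑ i ∈ Finset.range (s + 1),
          Submodule.span K (Set.range fun t : Fin k => fun j => a j ^ q ^ ((t : ℕ) + i))) := by
        exact coe_sum_submodule _ _
    _ = ↑(gab K q (k + s) a) := by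
        have hsets : (⋃ i ∈ Finset.range (s + 1),
              Set.range fun t : Fin k => fun j => a j ^ q ^ ((t : ℕ) + i))
            = Set.range fun t : Fin (k + s) => fun j => a j ^ q ^ (t : ℕ) := by
          ext x
          simp only [Set.mem_iUnion, Set.mem_range, Finset.mem_range]
          constructor
          · rintro ⟨i, hi, t, rfl⟩
            exact ⟨⟨(t : ℕ) + i, by omega⟩, rfl⟩
          · rintro ⟨j, rfl⟩
            by_cases hj : (j : ℕ) < k
            · exact ⟨0, by omega, ⟨j, hj⟩, by simp⟩
            · refine ⟨(j : ℕ) - k + 1, by omega, ⟨k - 1, by omega⟩, ?_⟩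
              funext l
              congr 2
              show k - 1 + ((j : ℕ) - k + 1) = (j : ℕ)
              omega
        rw [sum_span_eq, gab, hsets]
end

section
/- The Gabidulin code G_{n,k}(a) is an MRD code: its minimum rank distance equals n-k+1; equivalently, every nonzero codeword of G_{n,k}(a) has rank weight at least n-k+1. -/
/-- The rank weight of a vector over the extension `K / Fq`. -/
noncomputable def rankWeight (Fq : Type*) {K : Type*} [Field Fq] [Field K]
    [Algebra Fq K] {n : ℕ} (x : Fin n → K) : ℕ :=
  Module.finrank Fq (Submodule.span Fq (Set.range x))

section Aux

open Polynomial Module Submodule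

variable {Fq K : Type*} [Field Fq] [Fintype Fq] [Field K] [Algebra Fq K]

lemma pow_q_add (m : ℕ) (x y : K) :
    (x + y) ^ (Fintype.card Fq) ^ m
      = x ^ (Fintype.card Fq) ^ m + y ^ (Fintype.card Fq) ^ m := by
  haveI : CharP Fq (ringChar Fq) := ringChar.charP Fq
  obtain ⟨e, hp, hcard⟩ := FiniteField.card Fq (ringChar Fq)
  haveI : CharP K (ringChar Fq) :=
    charP_of_injective_algebraMap (algebraMap Fq K).injective _
  haveI := Fact.mk hp
  rw [hcard, ← pow_mul]
  exact add_pow_char_pow x y _ _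

lemma algebraMap_pow_q (m : ℕ) (c : Fq) :
    (algebraMap Fq K c) ^ (Fintype.card Fq) ^ m = algebraMap Fq K c := by
  rw [← map_pow, FiniteField.pow_card_pow]

/-- The `Fq`-linearized polynomial map attached to coefficients `lam`. -/
noncomputable def flin {k : ℕ} (lam : Fin k → K) : K →ₗ[Fq] K where
  toFun x := ∑ s : Fin k, lam s * x ^ (Fintype.card Fq) ^ (s : ℕ)
  map_add' x y := by
    simp only [pow_q_add, mul_add]
    rw [Finset.sum_add_distrib]
  map_smul' c x := by
    simp only [Algebra.smul_def, RingHom.id_apply, mul_pow, algebraMap_pow_q,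
      Finset.mul_sum, mul_left_comm]

lemma flin_apply {k : ℕ} (lam : Fin k → K) (x : K) :
    flin (Fq := Fq) lam x = ∑ s : Fin k, lam s * x ^ (Fintype.card Fq) ^ (s : ℕ) := rfl

lemma ker_flin_finite {k : ℕ} {lam : Fin k → K} (h : lam ≠ 0) :
    (LinearMap.ker (flin (Fq := Fq) lam) : Set K).Finite ∧
      Module.finrank Fq (LinearMap.ker (flin (Fq := Fq) lam)) ≤ k - 1 := by
  classical
  have hq1 : 1 < Fintype.card Fq := Fintype.one_lt_card
  set q := Fintype.card Fq with hq
  set P : K[X] := ∑ s : Fin k, C (lam s) * X ^ q ^ (s : ℕ) with hPdef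
  have hev : ∀ x : K, P.eval x = flin (Fq := Fq) lam x := by
    intro x
    simp [hPdef, flin_apply, eval_finset_sum]
    rfl
  obtain ⟨s0, hs0⟩ : ∃ s, lam s ≠ 0 := by
    by_contra h'; push_neg at h'; exact h (funext h')
  have hcoeff : P.coeff (q ^ (s0 : ℕ)) = lam s0 := by
    rw [hPdef, finset_sum_coeff]
    rw [Finset.sum_eq_single s0]
    · simp [coeff_C_mul, coeff_X_pow]
    · intro b _ hb
      simp only [coeff_C_mul, coeff_X_pow]
      rw [if_neg, mul_zero]
      intro hqb
      exact hb (Fin.ext (Nat.pow_right_injective hq1 hqb.symm))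
    · intro hs; exact absurd (Finset.mem_univ s0) hs
  have hP : P ≠ 0 := by
    intro h0
    rw [h0, coeff_zero] at hcoeff
    exact hs0 hcoeff.symm
  have hsub : (LinearMap.ker (flin (Fq := Fq) lam) : Set K) ⊆ {x | P.IsRoot x} := by
    intro x hx
    have : flin (Fq := Fq) lam x = 0 := LinearMap.mem_ker.mp hx
    simp [IsRoot, hev, this]
  have hfin : (LinearMap.ker (flin (Fq := Fq) lam) : Set K).Finite :=
    (P.finite_setOf_isRoot hP).subset hsub
  refine ⟨hfin, ?_⟩
  have hdeg : P.natDegree ≤ q ^ (k - 1) := by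
    refine natDegree_sum_le_of_forall_le _ _ (fun s _ => ?_)
    refine (natDegree_C_mul_le _ _).trans ?_
    rw [natDegree_X_pow]
    exact Nat.pow_le_pow_right (le_of_lt hq1) (by omega)
  haveI : Fintype ↥(LinearMap.ker (flin (Fq := Fq) lam)) := hfin.fintype
  have hcard : Fintype.card ↥(LinearMap.ker (flin (Fq := Fq) lam)) ≤ q ^ (k - 1) := by
    have hsubF : Set.toFinset (LinearMap.ker (flin (Fq := Fq) lam) : Set K)
        ⊆ P.roots.toFinset := by
      intro x hx
      rw [Set.mem_toFinset] at hx
      rw [Multiset.mem_toFinset, mem_roots hP]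
      exact hsub hx
    calc Fintype.card ↥(LinearMap.ker (flin (Fq := Fq) lam))
        = (Set.toFinset (LinearMap.ker (flin (Fq := Fq) lam) : Set K)).card :=
          (Set.toFinset_card _).symm
      _ ≤ P.roots.toFinset.card := Finset.card_le_card hsubF
      _ ≤ Multiset.card P.roots := Multiset.toFinset_card_le _
      _ ≤ P.natDegree := P.card_roots' 
      _ ≤ q ^ (k - 1) := hdeg
  have hpow : q ^ Module.finrank Fq ↥(LinearMap.ker (flin (Fq := Fq) lam)) ≤ q ^ (k - 1) := by
    rw [← card_eq_pow_finrank (K := Fq)]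
    exact hcard
  exact (Nat.pow_le_pow_iff_right hq1).mp hpow

lemma rankWeight_flin {n k : ℕ} (lam : Fin k → K) (a : Fin n → K) :
    rankWeight Fq (fun j => flin (Fq := Fq) lam (a j))
      + Module.finrank Fq (LinearMap.ker ((flin (Fq := Fq) lam).domRestrict
          (Submodule.span Fq (Set.range a))))
      = Module.finrank Fq (Submodule.span Fq (Set.range a)) := by
  haveI : FiniteDimensional Fq (Submodule.span Fq (Set.range a)) :=
    FiniteDimensional.span_of_finite Fq (Set.finite_range a)
  have h := LinearMap.finrank_range_add_finrank_ker
    ((flin (Fq := Fq) lam).domRestrict (Submodule.span Fq (Set.range a)))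
  rw [← h]
  have hspan : Submodule.span Fq (Set.range fun j => flin (Fq := Fq) lam (a j))
      = LinearMap.range ((flin (Fq := Fq) lam).domRestrict
          (Submodule.span Fq (Set.range a))) := by
    rw [LinearMap.range_domRestrict, Submodule.map_span, ← Set.range_comp]
    rfl
  unfold rankWeight
  rw [hspan]

lemma ker_domRestrict_le {n k : ℕ} {lam : Fin k → K} (h : lam ≠ 0) (a : Fin n → K) :
    Module.finrank Fq (LinearMap.ker ((flin (Fq := Fq) lam).domRestrict
        (Submodule.span Fq (Set.range a)))) ≤ k - 1 := by
  obtain ⟨hfin, hrank⟩ := ker_flin_finite (Fq := Fq) (K := K) h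
  haveI : Finite ↥(LinearMap.ker (flin (Fq := Fq) lam)) := hfin.to_subtype
  haveI : Module.Finite Fq ↥(LinearMap.ker (flin (Fq := Fq) lam)) :=
    Module.Finite.of_finite
  set U := Submodule.span Fq (Set.range a) with hU
  have hle : (LinearMap.ker ((flin (Fq := Fq) lam).domRestrict U)).map U.subtype
      ≤ LinearMap.ker (flin (Fq := Fq) lam) := by
    rintro x ⟨y, hy, rfl⟩
    simpa [LinearMap.mem_ker, LinearMap.domRestrict_apply] using hy
  calc Module.finrank Fq ↥(LinearMap.ker ((flin (Fq := Fq) lam).domRestrict U))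
      = Module.finrank Fq
          ↥((LinearMap.ker ((flin (Fq := Fq) lam).domRestrict U)).map U.subtype) :=
        (Submodule.finrank_map_subtype_eq _ _).symm
    _ ≤ Module.finrank Fq ↥(LinearMap.ker (flin (Fq := Fq) lam)) :=
        Submodule.finrank_mono hle
    _ ≤ k - 1 := hrank

end Aux

/-- the Gabidulin code `G_{n,k}(a)` is MRD: every nonzero
codeword has rank weight at least `n - k + 1`, and its minimum rank distance
equals `n - k + 1`. -/
theorem gab_is_MRD {Fq K : Type*} [Field Fq] [Fintype Fq] [Field K] [Algebra Fq K]
    {n k : ℕ} (hk : 1 ≤ k) (hkn : k ≤ n) (hnm : n ≤ Module.finrank Fq K)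
    (a : Fin n → K) (ha : LinearIndependent Fq a) :
    (∀ c ∈ gab K (Fintype.card Fq) k a, c ≠ 0 → n - k + 1 ≤ rankWeight Fq c)
      ∧ ∃ c ∈ gab K (Fintype.card Fq) k a, c ≠ 0 ∧ rankWeight Fq c = n - k + 1 := by
  classical
  open Module Submodule in
  have hU : Module.finrank Fq (Submodule.span Fq (Set.range a)) = n := by
    rw [finrank_span_eq_card ha, Fintype.card_fin]
  haveI : FiniteDimensional Fq (Submodule.span Fq (Set.range a)) :=
    FiniteDimensional.span_of_finite Fq (Set.finite_range a)
  constructor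
  · intro c hc hc0
    rw [gab] at hc
    obtain ⟨lam, hlam⟩ := (mem_span_range_iff_exists_fun K).mp hc
    have hce : c = fun j => flin (Fq := Fq) lam (a j) := by
      funext j
      rw [← hlam]
      simp [flin_apply, Finset.sum_apply]
    have hlam0 : lam ≠ 0 := by
      rintro rfl
      apply hc0
      rw [hce]; funext j; simp [flin_apply]
    have key := rankWeight_flin (Fq := Fq) lam a
    rw [hU, ← hce] at key
    have hb := ker_domRestrict_le (Fq := Fq) (K := K) hlam0 a
    omega
  · have hkn' : k - 1 ≤ n := by omega
    classical
    set M : Matrix (Fin (k-1)) (Fin k) K :=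
      (fun j s => a (Fin.castLE hkn' j) ^ (Fintype.card Fq) ^ (s : ℕ)) with hM
    have hninj : ¬ Function.Injective M.mulVecLin := by
      intro hinj
      have hle := LinearMap.finrank_le_finrank_of_injective hinj
      rw [Module.finrank_fintype_fun_eq_card, Module.finrank_fintype_fun_eq_card,
        Fintype.card_fin, Fintype.card_fin] at hle
      omega
    rw [Function.not_injective_iff] at hninj
    obtain ⟨x, y, hxy, hne⟩ := hninj
    set lam := x - y with hlamdef
    have hlam0 : lam ≠ 0 := sub_ne_zero.mpr hne
    have hTz : M.mulVecLin lam = 0 := by rw [hlamdef, map_sub, hxy, sub_self]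
    have hzero : ∀ j : Fin (k-1), flin (Fq := Fq) lam (a (Fin.castLE hkn' j)) = 0 := by
      intro j
      have h0 := congrFun hTz j
      simp only [Matrix.mulVecLin_apply, Matrix.mulVec, dotProduct,
        Pi.zero_apply, hM] at h0
      rw [flin_apply, ← h0]
      exact Finset.sum_congr rfl fun s _ => mul_comm _ _
    set c := fun j => flin (Fq := Fq) lam (a j) with hcdef
    have hcmem : c ∈ gab K (Fintype.card Fq) k a := by
      rw [gab]
      refine (mem_span_range_iff_exists_fun K).mpr ⟨lam, ?_⟩
      funext j
      simp [hcdef, flin_apply, Finset.sum_apply]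
    set U := Submodule.span Fq (Set.range a) with hUdef
    have hub := ker_domRestrict_le (Fq := Fq) hlam0 a
    have hmem : ∀ j : Fin (k-1), a (Fin.castLE hkn' j) ∈ U :=
      fun j => Submodule.subset_span ⟨_, rfl⟩
    set KD := LinearMap.ker ((flin (Fq := Fq) lam).domRestrict U) with hKD
    let w : Fin (k-1) → ↥KD := fun j => ⟨⟨a (Fin.castLE hkn' j), hmem j⟩, by
      simp [hKD, LinearMap.mem_ker, LinearMap.domRestrict_apply, hzero j]⟩
    have hw : LinearIndependent Fq w := by
      have h1 : LinearIndependent Fq (a ∘ Fin.castLE hkn') :=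
        ha.comp _ (Fin.castLE_injective hkn')
      have h2 : LinearIndependent Fq ((U.subtype ∘ₗ KD.subtype) ∘ w) := h1
      exact h2.of_comp _
    have hlb : k - 1 ≤ Module.finrank Fq ↥KD := by
      have := hw.fintype_card_le_finrank
      simpa using this
    have key := rankWeight_flin (Fq := Fq) lam a
    rw [← hUdef, ← hKD, ← hcdef, hU] at key
    have key' : rankWeight Fq c + Module.finrank Fq ↥KD = n := key
    have hub' : Module.finrank Fq ↥KD ≤ k - 1 := hub
    have hlb' : k - 1 ≤ Module.finrank Fq ↥KD := hlb
    have hc0 : c ≠ 0 := by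
      intro h0
      have hzero' : ∀ j : Fin n, flin (Fq := Fq) lam (a j) = 0 := fun j => congrFun h0 j
      have hmem' : ∀ j : Fin n, a j ∈ U := fun j => Submodule.subset_span ⟨_, rfl⟩
      let w' : Fin n → ↥KD := fun j => ⟨⟨a j, hmem' j⟩, by
        simp [hKD, LinearMap.mem_ker, LinearMap.domRestrict_apply, hzero' j]⟩
      have hw' : LinearIndependent Fq w' := by
        have h2 : LinearIndependent Fq ((U.subtype ∘ₗ KD.subtype) ∘ w') := ha
        exact h2.of_comp _
      have hn : n ≤ Module.finrank Fq ↥KD := by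
        have := hw'.fintype_card_le_finrank
        simpa using this
      have hn' : n ≤ Module.finrank Fq ↥KD := hn
      omega
    exact ⟨c, hcmem, hc0, by omega⟩
end

section
/- A k×n Moore matrix over F_{q^m} generated by a vector a with rank weight n (coordinates linearly independent over F_q) has rank k, provided k ≤ n ≤ m. -/
/-- a `k × n` Moore matrix over `K = F_{q^m}` generated by a
vector `a` whose coordinates are linearly independent over `Fq` has rank `k`,
provided `k ≤ n ≤ m`. -/
theorem moore_matrix_rank {Fq K : Type*} [Field Fq] [Fintype Fq] [Field K]
    [Algebra Fq K] {n k : ℕ} (hkn : k ≤ n) (hnm : n ≤ Module.finrank Fq K)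
    (a : Fin n → K) (ha : LinearIndependent Fq a) :
    Matrix.rank (Matrix.of fun s : Fin k => fun j : Fin n =>
      a j ^ Fintype.card Fq ^ (s : ℕ)) = k := by
  classical
  set q := Fintype.card Fq with hqdef
  have hq2 : 2 ≤ q := Fintype.one_lt_card
  -- characteristic setup
  set p := ringChar Fq with hpdef
  have hp : p.Prime := CharP.char_is_prime Fq p
  haveI : Fact p.Prime := ⟨hp⟩
  obtain ⟨e, -, hqe⟩ := FiniteField.card Fq p
  haveI : CharP K p := charP_of_injective_algebraMap (algebraMap Fq K).injective p
  haveI : ExpChar K p := ExpChar.prime hp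
  -- the q^s power map is additive on K
  have hfrob : ∀ (s : ℕ) (x y : K), (x + y) ^ q ^ s = x ^ q ^ s + y ^ q ^ s := by
    intro s x y
    have hqe' : q = p ^ (e : ℕ) := hqe
    rw [hqe', ← pow_mul]
    exact add_pow_expChar_pow x y p ((e : ℕ) * s)
  -- the rows of the matrix are linearly independent over K
  have hrows : LinearIndependent K
      (fun s : Fin k => fun j : Fin n => a j ^ q ^ (s : ℕ)) := by
    rw [Fintype.linearIndependent_iff]
    intro g hg
    by_contra hc
    push_neg at hc
    obtain ⟨s0, hs0⟩ := hc
    have hg' : ∀ j : Fin n, ∑ s : Fin k, g s * a j ^ q ^ (s : ℕ) = 0 := by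
      intro j
      have := congrFun hg j
      simpa using this
    -- the associated q-polynomial
    set P : Polynomial K :=
      ∑ s : Fin k, Polynomial.C (g s) * Polynomial.X ^ q ^ (s : ℕ) with hP
    have hPcoeff : ∀ s : Fin k, P.coeff (q ^ (s : ℕ)) = g s := by
      intro s
      rw [hP, Polynomial.finset_sum_coeff]
      rw [Finset.sum_eq_single s]
      · simp [Polynomial.coeff_X_pow]
      · intro t _ hts
        simp only [Polynomial.coeff_C_mul, Polynomial.coeff_X_pow]
        rw [if_neg, mul_zero]
        intro h
        exact hts (Fin.ext (Nat.pow_right_injective hq2 h)).symm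
      · intro h; exact absurd (Finset.mem_univ s) h
    have hPne : P ≠ 0 := by
      intro h
      apply hs0
      rw [← hPcoeff s0, h, Polynomial.coeff_zero]
    have hdeg : P.natDegree ≤ q ^ (k - 1) := by
      rw [hP]
      refine Polynomial.natDegree_sum_le_of_forall_le _ _ (fun s _ => ?_)
      refine le_trans (Polynomial.natDegree_C_mul_le _ _) ?_
      refine le_trans (Polynomial.natDegree_X_pow_le _) ?_
      exact Nat.pow_le_pow_right (by omega) (by omega)
    -- every element of the Fq-span of a is a root of P
    have heval : ∀ x : K, P.eval x = ∑ s : Fin k, g s * x ^ q ^ (s : ℕ) := by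
      intro x
      rw [hP, Polynomial.eval_finset_sum]
      simp
    have hroot : ∀ t : Fin n → Fq,
        P.eval (∑ j, algebraMap Fq K (t j) * a j) = 0 := by
      intro t
      rw [heval]
      have hpow : ∀ s : Fin k,
          (∑ j, algebraMap Fq K (t j) * a j) ^ q ^ (s : ℕ)
            = ∑ j, algebraMap Fq K (t j) * a j ^ q ^ (s : ℕ) := by
        intro s
        have hqe' : q = p ^ (e : ℕ) := hqe
        have hqs : q ^ (s : ℕ) = p ^ ((e : ℕ) * (s : ℕ)) := by
          rw [hqe', ← pow_mul]
        rw [hqs]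
        rw [show (∑ j, algebraMap Fq K (t j) * a j) ^ p ^ ((e : ℕ) * (s : ℕ))
            = iterateFrobenius K p ((e : ℕ) * (s : ℕ))
              (∑ j, algebraMap Fq K (t j) * a j) from rfl]
        rw [map_sum]
        refine Finset.sum_congr rfl (fun j _ => ?_)
        rw [map_mul, iterateFrobenius_def, iterateFrobenius_def, ← hqs,
          ← map_pow, FiniteField.pow_card_pow]
      calc ∑ s : Fin k, g s * (∑ j, algebraMap Fq K (t j) * a j) ^ q ^ (s : ℕ)
          = ∑ s : Fin k, ∑ j, algebraMap Fq K (t j) * (g s * a j ^ q ^ (s : ℕ)) := by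
            refine Finset.sum_congr rfl (fun s _ => ?_)
            rw [hpow, Finset.mul_sum]
            refine Finset.sum_congr rfl (fun j _ => ?_)
            ring
        _ = ∑ j, algebraMap Fq K (t j) * ∑ s : Fin k, g s * a j ^ q ^ (s : ℕ) := by
            rw [Finset.sum_comm]
            exact Finset.sum_congr rfl (fun j _ => (Finset.mul_sum _ _ _).symm)
        _ = 0 := by
            simp [hg']
    -- the map t ↦ ∑ tⱼ aⱼ is injective, giving q^n distinct roots
    have hinj : Function.Injective
        (fun t : Fin n → Fq => ∑ j, algebraMap Fq K (t j) * a j) := by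
      intro t t' h
      have h0 : ∑ j, (t j - t' j) • a j = 0 := by
        simp only [sub_smul, Finset.sum_sub_distrib]
        rw [sub_eq_zero]
        simpa [Algebra.smul_def] using h
      funext j
      have := (Fintype.linearIndependent_iff.mp ha) _ h0 j
      exact sub_eq_zero.mp this
    -- count roots
    have hsub : (Finset.univ.image
        (fun t : Fin n → Fq => ∑ j, algebraMap Fq K (t j) * a j))
        ⊆ P.roots.toFinset := by
      intro x hx
      obtain ⟨t, -, rfl⟩ := Finset.mem_image.mp hx
      rw [Multiset.mem_toFinset, Polynomial.mem_roots hPne]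
      exact hroot t
    have hcard1 : (Finset.univ.image
        (fun t : Fin n → Fq => ∑ j, algebraMap Fq K (t j) * a j)).card = q ^ n := by
      rw [Finset.card_image_of_injective _ hinj, Finset.card_univ, Fintype.card_fun]
      simp [hqdef]
    have hcard2 : q ^ n ≤ q ^ (k - 1) := by
      rw [← hcard1]
      exact le_trans (Finset.card_le_card hsub) (le_trans
        (Multiset.toFinset_card_le _) (le_trans (Polynomial.card_roots' P) hdeg))
    have hk0 : 0 < k := s0.pos
    have hk1 : k - 1 < n := Nat.lt_of_lt_of_le (Nat.pred_lt hk0.ne') hkn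
    exact absurd hcard2 (not_le.mpr (Nat.pow_lt_pow_right hq2 hk1))
  have := hrows.rank_matrix
  rw [Fintype.card_fin] at this
  exact this
end

section
/- Let G be a generator matrix of an [n,k] Gabidulin code G_{n,k}(a) over F_{q^m} with minimum rank distance n-k+1, and let M be a k×n matrix over F_{q^m} with F_q-column rank l satisfying l < n-k+1. Then the matrix G_M = G + M has full rank k. -/
/-- if `G` is a (full-rank) generator matrix of an `[n,k]`
Gabidulin code with minimum rank distance `n - k + 1`, and `M` is a `k × n`
matrix over `K` of `Fq`-column rank `l < n - k + 1`, then `G_M = G + M`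
has full rank `k`. -/
theorem rank_add_low_colRank {Fq K : Type*} [Field Fq] [Fintype Fq] [Field K]
    [Algebra Fq K] {n k l : ℕ} (hk : 1 ≤ k) (hkn : k < n)
    (hnm : n ≤ Module.finrank Fq K)
    (a : Fin n → K) (ha : LinearIndependent Fq a)
    (G : Fin k → Fin n → K) (hGli : LinearIndependent K G)
    (hGgen : Submodule.span K (Set.range G) = gab K (Fintype.card Fq) k a)
    (hMRD : ∀ c ∈ gab K (Fintype.card Fq) k a, c ≠ 0 → n - k + 1 ≤ rankWeight Fq c)
    (M : Fin k → Fin n → K)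
    (hClr : Module.finrank Fq
        (Submodule.span Fq (Set.range fun j => fun i => M i j)) = l)
    (hl : l < n - k + 1) :
    Matrix.rank (Matrix.of fun i j => G i j + M i j) = k := by

  have hfin : FiniteDimensional Fq K := by
    by_contra h
    rw [Module.finrank_of_infinite_dimensional h] at hnm
    omega
  -- show rows of G + M are linearly independent over K
  have hli : LinearIndependent K (fun i : Fin k => fun j => G i j + M i j) := by
    rw [Fintype.linearIndependent_iff]
    intro x hx
    by_contra hxne
    push_neg at hxne
    obtain ⟨i0, hi0⟩ := hxne
    have hxne' : x ≠ 0 := fun h => hi0 (by simp [h])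
    -- the codeword c = ∑ x i • G i
    set c : Fin n → K := ∑ i, x i • G i with hc
    have hcmem : c ∈ gab K (Fintype.card Fq) k a := by
      rw [← hGgen]
      exact Submodule.sum_mem _ fun i _ =>
        Submodule.smul_mem _ _ (Submodule.subset_span ⟨i, rfl⟩)
    have hcne : c ≠ 0 := by
      intro h
      have := Fintype.linearIndependent_iff.mp hGli x (by
        rw [← h, hc])
      exact hxne' (funext this)
    -- c = - ∑ x i • M i
    have hceq : c = -(∑ i, x i • M i) := by
      have h0 : (∑ i, x i • (fun j => G i j + M i j)) = 0 := hx
      have : c + ∑ i, x i • M i = 0 := by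
        rw [hc, ← h0, ← Finset.sum_add_distrib]
        exact Finset.sum_congr rfl fun i _ => by funext j; simp [mul_add]
      linear_combination (norm := abel) this
    -- the Fq-linear functional v ↦ -∑ x i * v i
    let f : (Fin k → K) →ₗ[Fq] K :=
      { toFun := fun v => -(∑ i, x i * v i)
        map_add' := by
          intro u v
          simp only [Pi.add_apply, mul_add, Finset.sum_add_distrib, neg_add]
        map_smul' := by
          intro r v
          simp [Finset.mul_sum, Algebra.smul_def, mul_left_comm] }
    have hcj : ∀ j, c j = f (fun i => M i j) := by
      intro j
      rw [hceq]
      simp [f]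
    -- rank weight of c is at most l
    have hle : rankWeight Fq c ≤ l := by
      have hspan : Submodule.span Fq (Set.range c) ≤
          Submodule.map f (Submodule.span Fq (Set.range fun j => fun i => M i j)) := by
        rw [Submodule.span_le]
        rintro _ ⟨j, rfl⟩
        exact ⟨fun i => M i j, Submodule.subset_span ⟨j, rfl⟩, (hcj j).symm⟩
      calc rankWeight Fq c ≤ Module.finrank Fq
            (Submodule.map f (Submodule.span Fq (Set.range fun j => fun i => M i j))) :=
            Submodule.finrank_mono hspan
        _ ≤ Module.finrank Fq
            (Submodule.span Fq (Set.range fun j => fun i => M i j)) :=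
            Submodule.finrank_map_le f _
        _ = l := hClr
    have := hMRD c hcmem hcne
    omega
  have := LinearIndependent.rank_matrix (M := Matrix.of fun i j => G i j + M i j) hli
  simpa using this
end

section
/- Let g, h be vectors in (F_{q^m})^n with rank weights at least n-k+2 such that the Gabidulin codes G_{n,n-k+2}(g) and G_{n,n-k+2}(h) intersect trivially, and let γ be in F_{q^m}. Then the 2(n-k) vectors g+γh; g^{[1]}, h^{[1]}, ..., g^{[n-k-1]}, h^{[n-k-1]}; and g^{[n-k]}+γ^{[1]}h^{[n-k]} are linearly independent over F_{q^m}. -/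
open Polynomial in
lemma moore_indep {Fq K : Type*} [Field Fq] [Fintype Fq] [Field K]
    [Algebra Fq K] {n r : ℕ} (x : Fin n → K) (hx : r + 1 ≤ rankWeight Fq x) :
    LinearIndependent K (fun s : Fin (r + 1) => fun j => x j ^ Fintype.card Fq ^ (s : ℕ)) := by
  classical
  set q := Fintype.card Fq with hq
  have hq1 : 1 < q := Fintype.one_lt_card
  -- characteristic setup
  obtain ⟨p, hpc⟩ := CharP.exists Fq
  haveI : CharP Fq p := hpc
  obtain ⟨e, hp, hcard⟩ := FiniteField.card Fq p
  haveI hfact : Fact p.Prime := ⟨hp⟩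
  haveI : CharP K p := charP_of_injective_algebraMap (algebraMap Fq K).injective p
  have hpow : ∀ (a b : K) (s : ℕ), (a + b) ^ q ^ s = a ^ q ^ s + b ^ q ^ s := by
    intro a b s
    rw [show q = p ^ (e:ℕ) from hq.trans hcard, ← pow_mul, add_pow_char_pow]
  have hsc : ∀ (lam : Fq) (s : ℕ), (algebraMap Fq K lam) ^ q ^ s = algebraMap Fq K lam := by
    intro lam s
    rw [← map_pow, FiniteField.pow_card_pow]
  rw [Fintype.linearIndependent_iff]
  intro c hc
  by_contra hne
  push_neg at hne
  obtain ⟨s₀, hs₀⟩ := hne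
  -- the Fq-linear map
  set L : K →ₗ[Fq] K :=
    { toFun := fun a => ∑ s : Fin (r + 1), c s * a ^ q ^ (s : ℕ)
      map_add' := by
        intro a b
        simp only [hpow, mul_add, Finset.sum_add_distrib]
      map_smul' := by
        intro lam a
        simp only [Algebra.smul_def, mul_pow, hsc, RingHom.id_apply, Finset.mul_sum]
        exact Finset.sum_congr rfl fun s _ => by ring } with hL
  -- the polynomial
  set P : K[X] := ∑ s : Fin (r + 1), C (c s) * X ^ (q ^ (s : ℕ)) with hP
  have hPeval : ∀ a : K, P.eval a = L a := by
    intro a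
    simp [hP, hL, eval_finset_sum]
  have hP0 : P ≠ 0 := by
    intro h0
    apply hs₀
    have := congrArg (fun Q : K[X] => Q.coeff (q ^ (s₀ : ℕ))) h0
    simp only [hP, finset_sum_coeff, coeff_C_mul, coeff_X_pow, coeff_zero] at this
    rwa [Finset.sum_eq_single s₀ (fun s _ hss => by
        rw [if_neg, mul_zero]
        intro hqe
        exact hss (Fin.ext (Nat.pow_right_injective hq1 hqe.symm))) (by simp), if_pos rfl,
      mul_one] at this
  have hdeg : P.natDegree ≤ q ^ r := by
    apply natDegree_sum_le_of_forall_le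
    intro s _
    exact (natDegree_C_mul_X_pow_le _ _).trans
      (Nat.pow_le_pow_right (by omega) (by omega))
  -- kernel contains the span of x
  have hker : Submodule.span Fq (Set.range x) ≤ LinearMap.ker L := by
    rw [Submodule.span_le]
    rintro _ ⟨j, rfl⟩
    have := congrFun hc j
    simpa [hL] using this
  -- kernel is finite
  have hsub : (LinearMap.ker L : Set K) ⊆ ↑P.roots.toFinset := by
    intro a ha
    simp only [Multiset.mem_toFinset, Finset.coe_sort_coe, mem_roots', IsRoot.def,
      Finset.mem_coe]
    exact ⟨hP0, by rw [hPeval]; exact ha⟩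
  have hfin : (LinearMap.ker L : Set K).Finite :=
    Set.Finite.subset (P.roots.toFinset.finite_toSet) hsub
  haveI : Finite ↥(LinearMap.ker L) := hfin
  haveI : Module.Finite Fq ↥(LinearMap.ker L) := Module.Finite.of_finite
  haveI : Fintype ↥(LinearMap.ker L) := Fintype.ofFinite _
  -- cardinality bound
  have hcardle : Fintype.card ↥(LinearMap.ker L) ≤ q ^ r := by
    calc Fintype.card ↥(LinearMap.ker L) = Nat.card ↥(LinearMap.ker L) :=
          (Nat.card_eq_fintype_card).symm
      _ ≤ Nat.card ↥(↑P.roots.toFinset : Set K) :=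
          Nat.card_mono (P.roots.toFinset.finite_toSet) hsub
      _ = P.roots.toFinset.card := by
          rw [Nat.card_eq_fintype_card]; simp
      _ ≤ Multiset.card P.roots := P.roots.toFinset_card_le
      _ ≤ P.natDegree := P.card_roots'
      _ ≤ q ^ r := hdeg
  have hcardeq : Fintype.card ↥(LinearMap.ker L) = q ^ Module.finrank Fq ↥(LinearMap.ker L) :=
    Module.card_eq_pow_finrank
  have hdim : Module.finrank Fq ↥(LinearMap.ker L) ≤ r := by
    rw [hcardeq] at hcardle
    exact (Nat.pow_le_pow_iff_right hq1).mp hcardle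
  have : rankWeight Fq x ≤ r := by
    unfold rankWeight
    calc Module.finrank Fq ↥(Submodule.span Fq (Set.range x))
        ≤ Module.finrank Fq ↥(LinearMap.ker L) :=
          LinearMap.finrank_le_finrank_of_injective (Submodule.inclusion_injective hker)
      _ ≤ r := hdim
  omega

lemma cc_aux {Fq K : Type*} [Field Fq] [Fintype Fq] [Field K]
    [Algebra Fq K] {n m t : ℕ} (hm : m = t + 1)
    (g h : Fin n → K) (γ : K)
    (hg : m + 2 ≤ rankWeight Fq g) (hh : m + 2 ≤ rankWeight Fq h)
    (hdisj : gab K (Fintype.card Fq) (m + 2) g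
        ⊓ gab K (Fintype.card Fq) (m + 2) h = ⊥)
    (v : Fin m ⊕ Fin m → Fin n → K)
    (hl0 : ∀ i : Fin m, (i : ℕ) = 0 → v (Sum.inl i) = fun j => g j + γ * h j)
    (hl1 : ∀ i : Fin m, (i : ℕ) ≠ 0 →
      v (Sum.inl i) = fun j => g j ^ Fintype.card Fq ^ (i : ℕ))
    (hr0 : ∀ i : Fin m, (i : ℕ) = 0 → v (Sum.inr i) =
      fun j => g j ^ Fintype.card Fq ^ m
        + γ ^ Fintype.card Fq * h j ^ Fintype.card Fq ^ m)
    (hr1 : ∀ i : Fin m, (i : ℕ) ≠ 0 →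
      v (Sum.inr i) = fun j => h j ^ Fintype.card Fq ^ (i : ℕ)) :
    LinearIndependent K v := by
  classical
  subst hm
  set q := Fintype.card Fq with hq
  rw [Fintype.linearIndependent_iff]
  intro c hc
  have el0 : v (Sum.inl 0) = fun j => g j + γ * h j := hl0 0 rfl
  have el1 : ∀ i : Fin t, v (Sum.inl i.succ) = fun j => g j ^ q ^ ((i : ℕ) + 1) :=
    fun i => hl1 i.succ (by simp)
  have er0 : v (Sum.inr 0) =
      fun j => g j ^ q ^ (t + 1) + γ ^ q * h j ^ q ^ (t + 1) := hr0 0 rfl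
  have er1 : ∀ i : Fin t, v (Sum.inr i.succ) = fun j => h j ^ q ^ ((i : ℕ) + 1) :=
    fun i => hr1 i.succ (by simp)
  set G : Fin (t + 2) → (Fin n → K) := fun s => fun j => g j ^ q ^ (s : ℕ) with hG
  set H : Fin (t + 2) → (Fin n → K) := fun s => fun j => h j ^ q ^ (s : ℕ) with hH
  set d : Fin (t + 2) → K :=
    Fin.snoc (fun i : Fin (t + 1) => c (Sum.inl i)) (c (Sum.inr 0)) with hd
  set e : Fin (t + 2) → K :=
    Fin.snoc (Fin.cons (c (Sum.inl 0) * γ) (fun i : Fin t => c (Sum.inr i.succ)))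
      (c (Sum.inr 0) * γ ^ q) with he
  have key : (∑ s, d s • G s) + (∑ s, e s • H s) = 0 := by
    rw [← hc, Fintype.sum_sum_type]
    funext j
    rw [Fin.sum_univ_castSucc (f := fun s => d s • G s),
      Fin.sum_univ_castSucc (f := fun s => e s • H s)]
    simp only [Fin.sum_univ_castSucc (f := fun s => d s • G s),
      Fin.sum_univ_castSucc (f := fun s => e s • H s), Fin.sum_univ_succ,
      el0, el1, er0, er1,
      Pi.add_apply, Finset.sum_apply, Pi.smul_apply, smul_eq_mul, hd, he, hG, hH,
      Fin.snoc_castSucc, Fin.snoc_last, Fin.cons_zero, Fin.cons_succ,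
      Fin.castSucc_zero, Fin.coe_castSucc, Fin.val_succ, Fin.val_zero, Fin.val_last,
      pow_zero, pow_one]
    ring
  have hA : (∑ s, d s • G s) ∈ gab K q (t + 1 + 2) g := by
    apply Submodule.sum_smul_mem
    intro s _
    exact Submodule.subset_span ⟨⟨(s : ℕ), by omega⟩, rfl⟩
  have hB : (∑ s, e s • H s) ∈ gab K q (t + 1 + 2) h := by
    apply Submodule.sum_smul_mem
    intro s _
    exact Submodule.subset_span ⟨⟨(s : ℕ), by omega⟩, rfl⟩
  have hz : (∑ s, d s • G s) = 0 := by
    have hmem : (∑ s, d s • G s) ∈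
        gab K q (t + 1 + 2) g ⊓ gab K q (t + 1 + 2) h := by
      refine ⟨hA, ?_⟩
      have : (∑ s, d s • G s) = -(∑ s, e s • H s) := by
        rw [eq_neg_iff_add_eq_zero]; exact key
      rw [this]
      exact neg_mem hB
    rw [hdisj] at hmem
    exact (Submodule.mem_bot K).mp hmem
  have hz' : (∑ s, e s • H s) = 0 := by
    rw [hz, zero_add] at key; exact key
  have hgLI := Fintype.linearIndependent_iff.mp
    (moore_indep (Fq := Fq) g (r := t + 1) (by omega)) d hz
  have hhLI := Fintype.linearIndependent_iff.mp
    (moore_indep (Fq := Fq) h (r := t + 1) (by omega)) e hz'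
  intro i
  match i with
  | Sum.inl i =>
    have := hgLI i.castSucc
    rwa [hd, Fin.snoc_castSucc] at this
  | Sum.inr i =>
    refine Fin.cases ?_ ?_ i
    · have := hgLI (Fin.last (t + 1))
      rwa [hd, Fin.snoc_last] at this
    · intro j
      have := hhLI (j.succ.castSucc)
      rw [he, Fin.snoc_castSucc, Fin.cons_succ] at this
      exact this

/-- if `g, h` have rank weight at least `n - k + 2` and
`G_{n,n-k+2}(g) ∩ G_{n,n-k+2}(h) = {0}`, then for any `γ ∈ K` the `2(n-k)`
vectors `g + γh`; `g^{[1]}, h^{[1]}, …, g^{[n-k-1]}, h^{[n-k-1]}`; and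
`g^{[n-k]} + γ^{[1]} h^{[n-k]}` are linearly independent over `K`.
(The first family, indexed by `Sum.inl`, lists `g + γh` at index `0` and
`g^{[i]}` for `1 ≤ i ≤ n-k-1`; the second, indexed by `Sum.inr`, lists
`g^{[n-k]} + γ^q h^{[n-k]}` at index `0` and `h^{[i]}` for `1 ≤ i ≤ n-k-1`.) -/
theorem coggia_couvreur_indep {Fq K : Type*} [Field Fq] [Fintype Fq] [Field K]
    [Algebra Fq K] {n k : ℕ} (hkn : k < n) (hnm : n ≤ Module.finrank Fq K)
    (g h : Fin n → K) (γ : K)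
    (hg : n - k + 2 ≤ rankWeight Fq g) (hh : n - k + 2 ≤ rankWeight Fq h)
    (hdisj : gab K (Fintype.card Fq) (n - k + 2) g
        ⊓ gab K (Fintype.card Fq) (n - k + 2) h = ⊥) :
    LinearIndependent K (fun i : Fin (n - k) ⊕ Fin (n - k) =>
      match i with
      | Sum.inl i =>
          if (i : ℕ) = 0 then fun j => g j + γ * h j
          else fun j => g j ^ Fintype.card Fq ^ (i : ℕ)
      | Sum.inr i =>
          if (i : ℕ) = 0 then
            fun j => g j ^ Fintype.card Fq ^ (n - k)
              + γ ^ Fintype.card Fq * h j ^ Fintype.card Fq ^ (n - k)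
          else fun j => h j ^ Fintype.card Fq ^ (i : ℕ)) := by
  refine cc_aux (t := n - k - 1) (by omega) g h γ hg hh hdisj _ ?_ ?_ ?_ ?_ <;>
    intro i hi <;> simp only [hi, if_pos, if_neg, ite_true, ite_false, if_true, if_false] <;>
    first | rfl | (rw [if_neg hi])
end
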